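/- Let f_1, …, f_N : ℝⁿ → ℝⁿ be continuous vector fields. Assume there exist a continuously differentiable function V : ℝⁿ → ℝ, a compact set B ⊆ ℝⁿ, and constants γ ∈ ℝ, ρ > 0 such that V(x) = γ for all x on the topological boundary of B, V(x) > γ for all x ∈ ℝⁿ \ B, and ∇V(x) · f_i(x) ≤ -ρ for all x ∈ ℝⁿ \ B and all i = 1, …, N. Then for every solution x of the switched system with x(0) = x₀ ∉ B there exists a time t* with 0 ≤ t* ≤ (V(x₀) - γ)/ρ such that x(t) ∈ B for all t ≥ t*. -/

import Mathlib

/-- A solution of the switched system determined by the vector fields `f i` on `ℝⁿ`: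
a function differentiable on `[0,∞)` such that at every time `t ≥ 0` its derivative
(within `[0,∞)`) is given by one of the vector fields (arbitrary switching). -/
def IsSwitchedSolution {n N : ℕ}
    (f : Fin N → EuclideanSpace ℝ (Fin n) → EuclideanSpace ℝ (Fin n))
    (x : ℝ → EuclideanSpace ℝ (Fin n)) : Prop :=
  ∀ t : ℝ, 0 ≤ t → ∃ i : Fin N, HasDerivWithinAt x (f i (x t)) (Set.Ici 0) t

/-- Key decay estimate: while the solution stays outside `B`, the Lyapunov
function decreases at rate at least `ρ`. -/
lemma switched_decay {n N : ℕ}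
    (f : Fin N → EuclideanSpace ℝ (Fin n) → EuclideanSpace ℝ (Fin n))
    (V : EuclideanSpace ℝ (Fin n) → ℝ) (hV : ContDiff ℝ 1 V)
    (B : Set (EuclideanSpace ℝ (Fin n))) (ρ : ℝ)
    (hdec : ∀ x ∉ B, ∀ i : Fin N, fderiv ℝ V x (f i x) ≤ -ρ)
    (x : ℝ → EuclideanSpace ℝ (Fin n)) (hx : IsSwitchedSolution f x)
    (a b : ℝ) (ha : 0 ≤ a) (hab : a ≤ b)
    (hnB : ∀ t ∈ Set.Icc a b, x t ∉ B) :
    V (x b) + ρ * b ≤ V (x a) + ρ * a := by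
  set h : ℝ → ℝ := fun t => V (x t) + ρ * t with hh
  have hxcont : ContinuousOn x (Set.Icc a b) := by
    intro t ht
    have ht0 : (0:ℝ) ≤ t := le_trans ha ht.1
    obtain ⟨i, hd⟩ := hx t ht0
    exact (hd.continuousWithinAt).mono (fun s hs => le_trans ha hs.1)
  have hcont : ContinuousOn h (Set.Icc a b) := by
    apply ContinuousOn.add
    · exact hV.continuous.comp_continuousOn hxcont
    · exact (continuous_const.mul continuous_id).continuousOn
  have hderiv : ∀ t ∈ Set.Ioo a b, ∃ d ≤ 0, HasDerivAt h d t := by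
    intro t ht
    have ht0 : (0:ℝ) ≤ t := le_trans ha ht.1.le
    obtain ⟨i, hd⟩ := hx t ht0
    have htpos : 0 < t := lt_of_le_of_lt ha ht.1
    have hd' : HasDerivAt x (f i (x t)) t :=
      hd.hasDerivAt (Ici_mem_nhds htpos)
    have hVd : HasDerivAt (fun s => V (x s)) (fderiv ℝ V (x t) (f i (x t))) t :=
      ((hV.differentiable one_ne_zero (x t)).hasFDerivAt).comp_hasDerivAt t hd'
    have hhd : HasDerivAt h (fderiv ℝ V (x t) (f i (x t)) + ρ) t := by
      have := hVd.add ((hasDerivAt_id t).const_mul ρ); simp only [mul_one] at this; exact this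
    refine ⟨_, ?_, hhd⟩
    have := hdec (x t) (hnB t ⟨ht.1.le, ht.2.le⟩) i
    linarith
  have hmono : AntitoneOn h (Set.Icc a b) := by
    apply antitoneOn_of_deriv_nonpos (convex_Icc a b) hcont
    · intro t ht
      rw [interior_Icc] at ht
      obtain ⟨d, _, hdd⟩ := hderiv t ht
      exact hdd.differentiableAt.differentiableWithinAt
    · intro t ht
      rw [interior_Icc] at ht
      obtain ⟨d, hd0, hdd⟩ := hderiv t ht
      rw [hdd.deriv]; exact hd0
  exact hmono (Set.left_mem_Icc.2 hab) (Set.right_mem_Icc.2 hab) hab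

/-- Once the solution is inside `B`, it stays inside `B` forever. -/
lemma switched_stays {n N : ℕ}
    (f : Fin N → EuclideanSpace ℝ (Fin n) → EuclideanSpace ℝ (Fin n))
    (V : EuclideanSpace ℝ (Fin n) → ℝ) (hV : ContDiff ℝ 1 V)
    (B : Set (EuclideanSpace ℝ (Fin n))) (hB : IsCompact B)
    (γ ρ : ℝ) (hρ : 0 < ρ)
    (hbd : ∀ x ∈ frontier B, V x = γ)
    (hgt : ∀ x ∉ B, V x > γ)
    (hdec : ∀ x ∉ B, ∀ i : Fin N, fderiv ℝ V x (f i x) ≤ -ρ)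
    (x : ℝ → EuclideanSpace ℝ (Fin n)) (hx : IsSwitchedSolution f x)
    (t₀ : ℝ) (ht₀ : 0 ≤ t₀) (hmem : x t₀ ∈ B) :
    ∀ s, t₀ ≤ s → x s ∈ B := by
  intro s hs
  by_contra hsB
  have hts : t₀ < s := by
    rcases lt_or_eq_of_le hs with h | h
    · exact h
    · exact absurd (h ▸ hmem) hsB
  -- continuity of x on [t₀, s]
  have hxcont : ContinuousOn x (Set.Icc t₀ s) := by
    intro t ht
    have ht0 : (0:ℝ) ≤ t := le_trans ht₀ ht.1
    obtain ⟨i, hd⟩ := hx t ht0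
    exact (hd.continuousWithinAt).mono (fun r hr => le_trans ht₀ hr.1)
  set S : Set ℝ := Set.Icc t₀ s ∩ x ⁻¹' B with hS
  have hSclosed : IsClosed S :=
    hxcont.preimage_isClosed_of_isClosed isClosed_Icc hB.isClosed
  have hSne : S.Nonempty := ⟨t₀, ⟨le_refl _, hts.le⟩, hmem⟩
  have hSbdd : BddAbove S := ⟨s, fun r hr => hr.1.2⟩
  set u := sSup S with hu
  have huS : u ∈ S := hSclosed.csSup_mem hSne hSbdd
  have hut₀ : t₀ ≤ u := huS.1.1
  have hu0 : (0:ℝ) ≤ u := le_trans ht₀ hut₀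
  have huB : x u ∈ B := huS.2
  have hus : u < s := lt_of_le_of_ne huS.1.2 (fun h => hsB (h ▸ huB))
  have hnotB : ∀ r, u < r → r ≤ s → x r ∉ B := by
    intro r hur hrs hrB
    have : r ∈ S := ⟨⟨le_trans hut₀ hur.le, hrs⟩, hrB⟩
    exact absurd (le_csSup hSbdd this) (not_le.2 hur)
  -- continuity of x at u from the right
  have hxu : Filter.Tendsto x (nhdsWithin u (Set.Ioi u)) (nhds (x u)) := by
    obtain ⟨i, hd⟩ := hx u hu0
    exact hd.continuousWithinAt.mono_left
      (nhdsWithin_mono u (fun r hr => le_trans hu0 (le_of_lt hr)))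
  have hIoo : Set.Ioo u s ∈ nhdsWithin u (Set.Ioi u) :=
    Ioo_mem_nhdsGT_of_mem ⟨le_refl u, hus⟩
  -- x u ∉ interior B
  have hnint : x u ∉ interior B := by
    intro hint
    have hev : ∀ᶠ r in nhdsWithin u (Set.Ioi u), x r ∈ interior B :=
      hxu (isOpen_interior.mem_nhds hint)
    have hev2 : ∀ᶠ r in nhdsWithin u (Set.Ioi u), x r ∉ B := by
      filter_upwards [hIoo] with r hr using hnotB r hr.1 hr.2.le
    obtain ⟨r, hr1, hr2⟩ := (hev.and hev2).exists
    exact hr2 (interior_subset hr1)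
  have hVu : V (x u) = γ := hbd (x u) ⟨subset_closure huB, hnint⟩
  -- V (x s) ≤ V (x a) for all a ∈ (u, s)
  have hev : ∀ᶠ a in nhdsWithin u (Set.Ioi u), V (x s) ≤ V (x a) := by
    filter_upwards [hIoo] with a ha
    have hdecay := switched_decay f V hV B ρ hdec x hx a s
      (le_trans hu0 ha.1.le) ha.2.le
      (fun t ht => hnotB t (lt_of_lt_of_le ha.1 ht.1) ht.2)
    nlinarith [ha.2, hρ]
  have hVtend : Filter.Tendsto (fun a => V (x a)) (nhdsWithin u (Set.Ioi u))
      (nhds (V (x u))) := (hV.continuous.tendsto (x u)).comp hxu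
  have : V (x s) ≤ V (x u) := ge_of_tendsto hVtend hev
  linarith [hgt (x s) hsB, hVu ▸ this]

/-- Under the Lyapunov-type conditions, any solution starting at `x₀ ∉ B` enters `B`
no later than time `(V(x₀) - γ)/ρ` and stays in `B` afterwards. -/
theorem enters_absorbing_set_of_lyapunov {n N : ℕ}
    (f : Fin N → EuclideanSpace ℝ (Fin n) → EuclideanSpace ℝ (Fin n))
    (hf : ∀ i, Continuous (f i))
    (V : EuclideanSpace ℝ (Fin n) → ℝ) (hV : ContDiff ℝ 1 V)
    (B : Set (EuclideanSpace ℝ (Fin n))) (hB : IsCompact B)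
    (γ ρ : ℝ) (hρ : 0 < ρ)
    (hbd : ∀ x ∈ frontier B, V x = γ)
    (hgt : ∀ x ∉ B, V x > γ)
    (hdec : ∀ x ∉ B, ∀ i : Fin N, fderiv ℝ V x (f i x) ≤ -ρ)
    (x : ℝ → EuclideanSpace ℝ (Fin n)) (hx : IsSwitchedSolution f x)
    (x₀ : EuclideanSpace ℝ (Fin n)) (hx0 : x 0 = x₀) (hx0B : x₀ ∉ B) :
    ∃ tstar : ℝ, 0 ≤ tstar ∧ tstar ≤ (V x₀ - γ) / ρ ∧
      ∀ t : ℝ, tstar ≤ t → x t ∈ B := by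
  set T : ℝ := (V x₀ - γ) / ρ with hT
  have hVx0 : V x₀ > γ := hgt x₀ hx0B
  have hTpos : 0 < T := div_pos (by linarith) hρ
  have hρT : ρ * T = V x₀ - γ := by
    rw [hT, mul_div_assoc', mul_div_cancel_left₀ _ hρ.ne']
  -- there is some t ∈ [0, T] with x t ∈ B
  have hexists : ∃ t ∈ Set.Icc (0:ℝ) T, x t ∈ B := by
    by_contra hc
    push_neg at hc
    have hdecay := switched_decay f V hV B ρ hdec x hx 0 T le_rfl hTpos.le hc
    have hTB : x T ∉ B := hc T ⟨hTpos.le, le_refl T⟩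
    have := hgt (x T) hTB
    rw [hx0] at hdecay
    nlinarith
  obtain ⟨t, ⟨ht0, htT⟩, htB⟩ := hexists
  exact ⟨t, ht0, htT, fun r hr =>
    switched_stays f V hV B hB γ ρ hρ hbd hgt hdec x hx t ht0 htB r hr⟩
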